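/- arXiv:2604.12244 — 4 statements merged into one kernel-verified Lean document; each statement's English description precedes it below -/
import Mathlib

section
/- Let f be a Möbius transformation with real coefficients such that f maps the real interval [-1,1] into [-ρ, ρ] for some ρ > 0. Then f maps the closed unit disk in ℂ into the closed disk of radius ρ, and the open unit disk into the open disk of radius ρ. -/
open Complex Metric

lemma key_affine (A B C : ℝ) (H : ∀ x : ℝ, -1 ≤ x → x ≤ 1 → 0 ≤ A*x^2 + B*x + C)
    (s x : ℝ) (h1 : x^2 ≤ s) (h2 : s ≤ 1) : 0 ≤ A*s + B*x + C := by
  have hxl : -1 ≤ x := by nlinarith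
  have hxr : x ≤ 1 := by nlinarith
  have hx := H x hxl hxr
  have hp := H 1 (by norm_num) le_rfl
  have hm := H (-1) le_rfl (by norm_num)
  rcases le_total 0 A with hA | hA
  · nlinarith
  · rcases le_total 0 B with hB | hB
    · nlinarith
    · nlinarith

/-- A real-coefficient Möbius transformation mapping `[-1,1]` into `[-ρ,ρ]`,
whose pole lies outside the closed unit disk (so it is holomorphic on a neighborhood of
the closed unit disk), maps the closed unit disk into the closed disk of radius `ρ` and
the open unit disk into the open disk of radius `ρ`. -/
theorem mobius_real_contraction_complex
    (a b c d ρ : ℝ) (hdet : a * d - b * c ≠ 0) (hρ : 0 < ρ)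
    (hpole : ∀ z : ℂ, ‖z‖ ≤ 1 → (c : ℂ) * z + d ≠ 0)
    (hmap : ∀ x : ℝ, x ∈ Set.Icc (-1 : ℝ) 1 → (a * x + b) / (c * x + d) ∈ Set.Icc (-ρ) ρ) :
    (∀ z : ℂ, ‖z‖ ≤ 1 → ‖((a : ℂ) * z + b) / ((c : ℂ) * z + d)‖ ≤ ρ) ∧
    (∀ z : ℂ, ‖z‖ < 1 → ‖((a : ℂ) * z + b) / ((c : ℂ) * z + d)‖ < ρ) := by
  -- real hypothesis in quadratic form
  have Hreal : ∀ x : ℝ, -1 ≤ x → x ≤ 1 →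
      0 ≤ (ρ^2*c^2 - a^2)*x^2 + (2*(ρ^2*c*d - a*b))*x + (ρ^2*d^2 - b^2) := by
    intro x hl hr
    have hd0 : c * x + d ≠ 0 := by
      have := hpole (x : ℂ) (by rw [Complex.norm_real]; exact abs_le.2 ⟨hl, hr⟩)
      intro h; apply this; push_cast; rw [show (c:ℂ)*x + d = ((c*x+d : ℝ) : ℂ) by push_cast; ring, h]; simp
    obtain ⟨hlo, hhi⟩ := hmap x ⟨hl, hr⟩
    have hq : ((a*x+b)/(c*x+d))^2 ≤ ρ^2 := by nlinarith
    have hcd2 : 0 < (c*x+d)^2 := by positivity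
    rw [div_pow, div_le_iff₀ hcd2] at hq
    nlinarith
  -- closed disk bound
  have Hle : ∀ z : ℂ, ‖z‖ ≤ 1 → ‖((a : ℂ) * z + b) / ((c : ℂ) * z + d)‖ ≤ ρ := by
    intro z hz
    have hden := hpole z hz
    have hs : z.re^2 + z.im^2 ≤ 1 := by
      have := Complex.sq_norm z
      have h1 : ‖z‖ ≤ 1 := hz
      nlinarith [Complex.normSq_apply z, Complex.sq_norm z, norm_nonneg z]
    have hkey := key_affine (ρ^2*c^2 - a^2) (2*(ρ^2*c*d - a*b)) (ρ^2*d^2 - b^2) Hreal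
      (z.re^2 + z.im^2) z.re (by nlinarith [sq_nonneg z.im]) hs
    have hnum : Complex.normSq ((a:ℂ)*z+b) = a^2*(z.re^2+z.im^2) + 2*(a*b)*z.re + b^2 := by
      simp [Complex.normSq_apply, Complex.add_re, Complex.add_im, Complex.mul_re, Complex.mul_im,
        Complex.ofReal_re, Complex.ofReal_im]; ring
    have hden2 : Complex.normSq ((c:ℂ)*z+d) = c^2*(z.re^2+z.im^2) + 2*(c*d)*z.re + d^2 := by
      simp [Complex.normSq_apply, Complex.add_re, Complex.add_im, Complex.mul_re, Complex.mul_im,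
        Complex.ofReal_re, Complex.ofReal_im]; ring
    have hdpos : 0 < ‖(c:ℂ)*z+d‖ := norm_pos_iff.2 hden
    rw [norm_div, div_le_iff₀ hdpos]
    have h1 : ‖(a:ℂ)*z+b‖^2 ≤ ρ^2 * ‖(c:ℂ)*z+d‖^2 := by
      rw [Complex.sq_norm, Complex.sq_norm, hnum, hden2]
      nlinarith [hkey]
    nlinarith [norm_nonneg ((a:ℂ)*z+b), mul_nonneg hρ.le hdpos.le]
  refine ⟨Hle, ?_⟩
  intro z hz
  rcases lt_or_eq_of_le (Hle z hz.le) with h | h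
  · exact h
  exfalso
  -- maximum modulus: f constant on ball
  set f : ℂ → ℂ := fun w => ((a : ℂ) * w + b) / ((c : ℂ) * w + d) with hf
  have hdiff : DifferentiableOn ℂ f (ball (0:ℂ) 1) := by
    apply DifferentiableOn.div
    · fun_prop
    · fun_prop
    · intro w hw
      exact hpole w (by simpa using (mem_ball_zero_iff.1 hw).le)
  have hzball : z ∈ ball (0:ℂ) 1 := mem_ball_zero_iff.2 hz
  have hmax : IsMaxOn (norm ∘ f) (ball (0:ℂ) 1) z := by
    intro w hw
    simp only [Function.comp_apply, hf, Set.mem_setOf_eq]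
    calc ‖((a : ℂ) * w + b) / ((c : ℂ) * w + d)‖ ≤ ρ := Hle w (mem_ball_zero_iff.1 hw).le
    _ = ‖f z‖ := h.symm
  have heq := Complex.eqOn_of_isPreconnected_of_isMaxOn_norm
    (convex_ball (0:ℂ) 1).isPreconnected isOpen_ball hdiff hzball hmax
  have h0 : f 0 = f z := heq (mem_ball_zero_iff.2 (by norm_num))
  have hhalf : f (1/2) = f z := heq (mem_ball_zero_iff.2 (by norm_num))
  have h01 : f 0 = f (1/2) := h0.trans hhalf.symm
  have hd0 : (c:ℂ)*0 + d ≠ 0 := hpole 0 (by simp)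
  have hd1 : (c:ℂ)*(1/2) + d ≠ 0 := hpole (1/2) (by norm_num)
  rw [hf] at h01
  simp only at h01
  rw [div_eq_div_iff hd0 hd1] at h01
  apply hdet
  have : (a:ℂ)*d - b*c = 0 := by linear_combination (-2:ℂ)*h01
  have := congrArg Complex.re this
  push_cast at this
  simpa using this
end

section
/- Let f be a Möbius transformation satisfying f(𝔻₁) ⊆ 𝔻_ρ for some 0 < ρ ≤ 1, where 𝔻_t denotes the open disk of radius t centered at 0. Then for all u, v in the open unit disk 𝔻₁, d_hyp(f(u), f(v)) ≤ ρ · d_hyp(u, v), where d_hyp is the hyperbolic (Poincaré) distance on 𝔻₁. -/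
set_option maxHeartbeats 1600000

open Complex

/-- Inverse hyperbolic tangent. -/
noncomputable def artanh (x : ℝ) : ℝ := (1 / 2) * Real.log ((1 + x) / (1 - x))

/-- The Poincaré hyperbolic distance on the open unit disk:
`d_hyp(z,w) = 2 artanh |(z-w)/(1 - conj w · z)|`. -/
noncomputable def dHyp (z w : ℂ) : ℝ :=
  2 * artanh ‖(z - w) / (1 - (starRingEnd ℂ) w * z)‖

lemma artanh_zero : artanh 0 = 0 := by simp [artanh]

lemma artanh_eq {x : ℝ} (h1 : x < 1) (h2 : -1 < x) :
    artanh x = (1/2) * (Real.log (1 + x) - Real.log (1 - x)) := by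
  rw [artanh, Real.log_div (by linarith) (by linarith)]

lemma artanh_nonneg {x : ℝ} (h0 : 0 ≤ x) (h1 : x < 1) : 0 ≤ artanh x := by
  have h : (1:ℝ) ≤ (1 + x) / (1 - x) := by
    rw [le_div_iff₀ (by linarith)]; linarith
  have := Real.log_nonneg h
  rw [artanh]; positivity

lemma artanh_mono {x y : ℝ} (hx : 0 ≤ x) (hxy : x ≤ y) (hy : y < 1) :
    artanh x ≤ artanh y := by
  have h1 : (0:ℝ) < 1 - y := by linarith
  have h2 : (0:ℝ) < 1 - x := by linarith
  have h3 : (0:ℝ) < (1 + x) / (1 - x) := by positivity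
  have h4 : (1 + x) / (1 - x) ≤ (1 + y) / (1 - y) := by
    rw [div_le_div_iff₀ h2 h1]; nlinarith
  have := Real.log_le_log h3 h4
  rw [artanh, artanh]; linarith

lemma mono_aux (ρ A B C s : ℝ) (hρ : 0 < ρ) (hA : 0 < A) (hB : 0 < B) (hC : 0 ≤ C)
    (hACB : A + C ≤ B) (hs0 : 0 ≤ s) (hs1 : s < 1)
    (hkey : ∀ x : ℝ, 0 ≤ x → x ≤ s → A * B * (1 - x^2) ≤ ρ * ((B + (A-C)*x) * (B - (A+C)*x))) :
    artanh (A * s / (B - C * s)) ≤ ρ * artanh s := by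
  set g : ℝ → ℝ := fun x => ρ * ((1/2) * (Real.log (1+x) - Real.log (1-x)))
      - (1/2) * (Real.log (B + (A-C)*x) - Real.log (B - (A+C)*x)) with hg
  have hpos : ∀ x ∈ Set.Icc (0:ℝ) s, 0 < B - (A+C)*x ∧ 0 < B + (A-C)*x ∧ 0 < 1 - x ∧ 0 < 1 + x := by
    intro x hx
    obtain ⟨hx0, hxs⟩ := hx
    have hACx : (A+C)*x ≤ (A+C)*s := by nlinarith
    have h1 : 0 < B - (A+C)*x := by nlinarith
    refine ⟨h1, ?_, by linarith, by linarith⟩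
    nlinarith [mul_nonneg hC hx0]
  have hderiv : ∀ x ∈ Set.Icc (0:ℝ) s, HasDerivAt g
      (ρ * ((1/2) * (1/(1+x) - (-1)/(1-x))) - (1/2) * ((A-C)/(B + (A-C)*x) - (-(A+C))/(B - (A+C)*x))) x := by
    intro x hx
    obtain ⟨p1, p2, p3, p4⟩ := hpos x hx
    have d1 : HasDerivAt (fun y : ℝ => Real.log (1 + y)) (1/(1+x)) x := by
      have : HasDerivAt (fun y : ℝ => 1 + y) 1 x := (hasDerivAt_id x).const_add 1
      simpa using this.log (by linarith)
    have d2 : HasDerivAt (fun y : ℝ => Real.log (1 - y)) ((-1)/(1-x)) x := by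
      have : HasDerivAt (fun y : ℝ => 1 - y) (-1) x := by
        simpa using (hasDerivAt_id x).const_sub 1
      simpa using this.log (by linarith)
    have d3 : HasDerivAt (fun y : ℝ => Real.log (B + (A-C)*y)) ((A-C)/(B + (A-C)*x)) x := by
      have : HasDerivAt (fun y : ℝ => B + (A-C)*y) (A-C) x := by
        simpa using ((hasDerivAt_id x).const_mul (A-C)).const_add B
      simpa using this.log (by linarith)
    have d4 : HasDerivAt (fun y : ℝ => Real.log (B - (A+C)*y)) ((-(A+C))/(B - (A+C)*x)) x := by
      have : HasDerivAt (fun y : ℝ => B - (A+C)*y) (-(A+C)) x := by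
        simpa using ((hasDerivAt_id x).const_mul (A+C)).const_sub B
      simpa [neg_div] using this.log (by linarith)
    exact (((d1.sub d2).const_mul (1/2)).const_mul ρ).sub ((d3.sub d4).const_mul (1/2))
  have hcont : ContinuousOn g (Set.Icc 0 s) :=
    fun x hx => (hderiv x hx).continuousAt.continuousWithinAt
  have hdiff : DifferentiableOn ℝ g (interior (Set.Icc 0 s)) := by
    rw [interior_Icc]
    exact fun x hx => ((hderiv x ⟨le_of_lt hx.1, le_of_lt hx.2⟩).differentiableAt).differentiableWithinAt
  have hdnn : ∀ x ∈ interior (Set.Icc 0 s), 0 ≤ deriv g x := by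
    rw [interior_Icc]
    intro x hx
    have hxI : x ∈ Set.Icc 0 s := ⟨le_of_lt hx.1, le_of_lt hx.2⟩
    obtain ⟨p1, p2, p3, p4⟩ := hpos x hxI
    rw [(hderiv x hxI).deriv]
    rw [div_sub_div _ _ (ne_of_gt p4) (ne_of_gt p3), div_sub_div _ _ (ne_of_gt p2) (ne_of_gt p1)]
    have e1 : 1 * (1-x) - (1+x) * (-1) = 2 := by ring
    have e2 : (A-C) * (B - (A+C)*x) - (B + (A-C)*x) * (-(A+C)) = 2 * (A*B) := by ring
    rw [e1, e2]
    have hk := hkey x hxI.1 hxI.2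
    have h5 : (A*B) / ((B + (A-C)*x) * (B - (A+C)*x)) ≤ ρ / ((1+x)*(1-x)) := by
      rw [div_le_div_iff₀ (by positivity) (by positivity)]
      nlinarith [hk]
    have heq : ρ * (1/2 * (2 / ((1+x)*(1-x)))) - 1/2 * (2 * (A*B) / ((B + (A-C)*x) * (B - (A+C)*x))) =
        ρ / ((1+x)*(1-x)) - (A*B) / ((B + (A-C)*x) * (B - (A+C)*x)) := by ring
    rw [heq]
    linarith [h5]
  have hmono := monotoneOn_of_deriv_nonneg (convex_Icc 0 s) hcont hdiff hdnn
  have hg0 : g 0 = 0 := by simp [hg]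
  have hgs := hmono (Set.left_mem_Icc.2 hs0) (Set.mem_Icc.2 ⟨hs0, le_rfl⟩) hs0
  rw [hg0] at hgs
  obtain ⟨q1, q2, q3, q4⟩ := hpos s (Set.mem_Icc.2 ⟨hs0, le_rfl⟩)
  have hBCs : 0 < B - C * s := by nlinarith [mul_nonneg (le_of_lt hA) hs0]
  have hfrac : (1 + A*s/(B-C*s)) / (1 - A*s/(B-C*s)) = (B + (A-C)*s) / (B - (A+C)*s) := by
    rw [div_eq_div_iff]
    · rw [one_add_div hBCs.ne', one_sub_div hBCs.ne', div_mul_eq_mul_div, mul_div_assoc']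
      congr 1; ring
    · have : 1 - A*s/(B-C*s) = (B - (A+C)*s)/(B-C*s) := by rw [one_sub_div hBCs.ne']; congr 1; ring
      rw [this]
      positivity
    · exact ne_of_gt q1
  have hart : artanh (A*s/(B-C*s)) = (1/2) * (Real.log (B + (A-C)*s) - Real.log (B - (A+C)*s)) := by
    rw [artanh, hfrac, Real.log_div (ne_of_gt q2) (ne_of_gt q1)]
  have harts : artanh s = (1/2) * (Real.log (1+s) - Real.log (1-s)) :=
    artanh_eq hs1 (by linarith)
  rw [hart, harts]
  simpa [hg] using hgs

lemma quad_aux (α β γ E t : ℝ) (hE : 0 < E) (hβ : 0 ≤ β) (hdet : α*γ - β^2 = -E^2)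
    (h0 : 0 ≤ γ) (h1 : 0 ≤ α + γ - 2*β) (h2 : 0 < α → α ≤ β)
    (ht0 : 0 ≤ t) (ht1 : t ≤ 1) : E*(1-t^2) ≤ α*t^2 - 2*β*t + γ := by
  rcases le_or_gt (α+E) 0 with hc | hc
  · -- α ≤ -E forces β = 0, α = -E, γ = E
    have hαneg : α < 0 := by linarith
    have hγE : γ ≤ E := by nlinarith
    have hγ2 : 2*β + E ≤ γ := by linarith
    have hβ0 : β = 0 := by linarith
    have hγeq : γ = E := by linarith
    have hαeq : α = -E := by
      have : α * E = -E^2 := by rw [← hγeq]; nlinarith [hdet]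
      nlinarith
    rw [hβ0, hγeq, hαeq]; nlinarith
  · rcases le_or_gt β (α+E) with hb | hb
    · have hγα : α + 2*E ≤ γ := by
        rcases lt_trichotomy α 0 with hα | hα | hα
        · by_contra hcon
          push_neg at hcon
          nlinarith [mul_nonneg (sub_nonneg.2 hb) (add_nonneg hβ (by linarith : (0:ℝ) ≤ α+E))]
        · have hβE : β = E := by nlinarith
          subst hα
          linarith [h1, hβE]
        · have hβα := h2 hα
          have hβαE : α + E ≤ β := by
            by_contra hcon
            push_neg at hcon
            nlinarith
          have hβeq : β = α + E := le_antisymm hb hβαE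
          have : α * γ = α^2 + 2*α*E := by rw [hβeq] at hdet; nlinarith
          have := mul_le_mul_of_nonneg_left (le_refl γ) hα.le
          nlinarith
      have key : (α+E) * (α*t^2 - 2*β*t + γ - E*(1-t^2)) = ((α+E)*t - β)^2 + E*(γ - α - 2*E) := by
        nlinarith [hdet]
      nlinarith [sq_nonneg ((α+E)*t - β), mul_nonneg hE.le (sub_nonneg.2 hγα), key,
        mul_pos hc hc]
    · nlinarith [mul_nonneg (sub_nonneg.2 ht1) (by nlinarith : (0:ℝ) ≤ 2*β - (α+E)*(1+t))]

lemma two_point (ρ : ℝ) (hρ0 : 0 < ρ) (hρ1 : ρ ≤ 1) (w1 w2 : ℂ)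
    (h1 : ‖w1‖ < ρ) (h2 : ‖w2‖ < ρ) :
    artanh ‖(w1 - w2) / (1 - (starRingEnd ℂ) w2 * w1)‖ ≤
      ρ * artanh (ρ * ‖w1 - w2‖ / ‖((ρ:ℂ))^2 - (starRingEnd ℂ) w2 * w1‖) := by
  set m := ‖w1‖ with hm
  set b := ‖w2‖ with hb
  set X := ‖w1 - w2‖ with hX
  set Y := ‖1 - (starRingEnd ℂ) w2 * w1‖ with hY
  set Z := ‖((ρ:ℂ))^2 - (starRingEnd ℂ) w2 * w1‖ with hZ
  have hm0 : 0 ≤ m := norm_nonneg _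
  have hb0 : 0 ≤ b := norm_nonneg _
  have hX0 : 0 ≤ X := norm_nonneg _
  have hY0 : 0 ≤ Y := norm_nonneg _
  have hZ0 : 0 ≤ Z := norm_nonneg _
  have hm1 : m < 1 := lt_of_lt_of_le h1 hρ1
  have hb1 : b < 1 := lt_of_lt_of_le h2 hρ1
  -- identity: Z^2 - ρ^2 X^2 = (ρ^2 - m^2)(ρ^2 - b^2)
  have cid : (((ρ:ℂ))^2 - (starRingEnd ℂ) w2 * w1) * (starRingEnd ℂ) (((ρ:ℂ))^2 - (starRingEnd ℂ) w2 * w1)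
      - ((ρ:ℂ))^2 * ((w1 - w2) * (starRingEnd ℂ) (w1 - w2))
      = (((ρ:ℂ))^2 - w1 * (starRingEnd ℂ) w1) * (((ρ:ℂ))^2 - w2 * (starRingEnd ℂ) w2) := by
    simp only [map_sub, map_mul, map_pow, Complex.conj_conj, Complex.conj_ofReal]
    ring
  rw [Complex.mul_conj, Complex.mul_conj, Complex.mul_conj, Complex.mul_conj] at cid
  have idZ : Z^2 - ρ^2 * X^2 = (ρ^2 - m^2) * (ρ^2 - b^2) := by
    have : (Complex.normSq (((ρ:ℂ))^2 - (starRingEnd ℂ) w2 * w1) : ℝ)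
        - ρ^2 * Complex.normSq (w1 - w2)
        = (ρ^2 - Complex.normSq w1) * (ρ^2 - Complex.normSq w2) := by
      exact_mod_cast cid
    simpa only [Complex.normSq_eq_norm_sq, ← hm, ← hb, ← hX, ← hZ] using this
  have hZX : ρ * X < Z := by
    have h3 : 0 < (ρ^2 - m^2) * (ρ^2 - b^2) := by
      apply mul_pos <;> nlinarith
    nlinarith [mul_nonneg (mul_nonneg (le_of_lt hρ0) hX0) hZ0]
  have hZpos : 0 < Z := lt_of_le_of_lt (by positivity) hZX
  have hcw : ‖(starRingEnd ℂ) w2 * w1‖ = b * m := by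
    rw [norm_mul, RCLike.norm_conj]
  have hYpos : 0 < Y := by
    have h5 := norm_sub_norm_le (1:ℂ) ((starRingEnd ℂ) w2 * w1)
    rw [hcw, norm_one] at h5
    have : b * m < 1 := by nlinarith
    rw [hY]
    linarith
  -- triangle identity
  have cid2 : ((1:ℂ) - w2 * (starRingEnd ℂ) w2) * (((ρ:ℂ))^2 - (starRingEnd ℂ) w2 * w1)
      = (((ρ:ℂ))^2 - w2 * (starRingEnd ℂ) w2) * (1 - (starRingEnd ℂ) w2 * w1)
        - ((1:ℂ) - ((ρ:ℂ))^2) * ((starRingEnd ℂ) w2 * (w1 - w2)) := by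
    ring
  have tri : (1 - b^2) * Z ≤ (ρ^2 - b^2) * Y + (1 - ρ^2) * (b * X) := by
    have e1 : ‖((1:ℂ) - w2 * (starRingEnd ℂ) w2) * (((ρ:ℂ))^2 - (starRingEnd ℂ) w2 * w1)‖
        = (1 - b^2) * Z := by
      rw [norm_mul, Complex.mul_conj]
      have : ‖((Complex.normSq w2 : ℝ) : ℂ)‖ = Complex.normSq w2 := by
        rw [Complex.norm_real, Real.norm_of_nonneg (Complex.normSq_nonneg _)]
      have hb2 : ((1:ℂ) - ((Complex.normSq w2 : ℝ) : ℂ)) = (((1 - b^2 : ℝ)) : ℂ) := by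
        push_cast
        rw [Complex.normSq_eq_norm_sq, ← hb]
        norm_cast
      rw [hb2, Complex.norm_real, Real.norm_of_nonneg (by nlinarith)]
    have e2 : ‖(((ρ:ℂ))^2 - w2 * (starRingEnd ℂ) w2) * (1 - (starRingEnd ℂ) w2 * w1)
        - ((1:ℂ) - ((ρ:ℂ))^2) * ((starRingEnd ℂ) w2 * (w1 - w2))‖
        ≤ (ρ^2 - b^2) * Y + (1 - ρ^2) * (b * X) := by
      refine le_trans (norm_sub_le _ _) ?_
      have f1 : ‖(((ρ:ℂ))^2 - w2 * (starRingEnd ℂ) w2) * (1 - (starRingEnd ℂ) w2 * w1)‖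
          = (ρ^2 - b^2) * Y := by
        rw [norm_mul, Complex.mul_conj]
        have hb2 : ((((ρ:ℝ)^2 : ℝ)) : ℂ) - ((Complex.normSq w2 : ℝ) : ℂ) = (((ρ^2 - b^2 : ℝ)) : ℂ) := by
          push_cast
          rw [Complex.normSq_eq_norm_sq, ← hb]
          norm_cast
        rw [show (((ρ:ℂ))^2 : ℂ) = (((ρ^2 : ℝ)) : ℂ) by push_cast; ring, hb2,
          Complex.norm_real, Real.norm_of_nonneg (by nlinarith)]
      have f2 : ‖((1:ℂ) - ((ρ:ℂ))^2) * ((starRingEnd ℂ) w2 * (w1 - w2))‖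
          = (1 - ρ^2) * (b * X) := by
        rw [norm_mul, norm_mul, RCLike.norm_conj,
          show ((1:ℂ) - ((ρ:ℂ))^2) = (((1 - ρ^2 : ℝ)) : ℂ) by push_cast; ring,
          Complex.norm_real, Real.norm_of_nonneg (by nlinarith)]
      rw [f1, f2]
    calc (1 - b^2) * Z = _ := (e1).symm
      _ = _ := by rw [cid2]
      _ ≤ _ := e2
  set s := ρ * X / Z with hs
  have hs0 : 0 ≤ s := by positivity
  have hs1 : s < 1 := (div_lt_one hZpos).mpr hZX
  have h1ρ2 : 0 ≤ 1 - ρ^2 := by nlinarith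
  have h1b2 : 0 < 1 - b^2 := by nlinarith
  have hA : 0 < ρ*(ρ^2-b^2) := mul_pos hρ0 (by nlinarith : (0:ℝ) < ρ^2-b^2)
  have hB : 0 < ρ^2*(1-b^2) := mul_pos (by positivity) h1b2
  have hC : 0 ≤ ρ*b*(1-ρ^2) := by positivity
  have hACB : ρ*(ρ^2-b^2) + ρ*b*(1-ρ^2) ≤ ρ^2*(1-b^2) := by
    nlinarith [mul_nonneg (mul_nonneg (mul_nonneg hρ0.le (by linarith : (0:ℝ) ≤ 1-ρ))
      (by linarith : (0:ℝ) ≤ 1-b)) (by linarith : (0:ℝ) ≤ ρ-b)]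
  have hkey : ∀ x : ℝ, 0 ≤ x → x ≤ s →
      (ρ*(ρ^2-b^2)) * (ρ^2*(1-b^2)) * (1 - x^2) ≤
        ρ * ((ρ^2*(1-b^2) + (ρ*(ρ^2-b^2) - ρ*b*(1-ρ^2))*x) * (ρ^2*(1-b^2) - (ρ*(ρ^2-b^2) + ρ*b*(1-ρ^2))*x)) := by
    intro x hx0 hxs
    have idk : ρ * ((ρ^2*(1-b^2) + (ρ*(ρ^2-b^2) - ρ*b*(1-ρ^2))*x) * (ρ^2*(1-b^2) - (ρ*(ρ^2-b^2) + ρ*b*(1-ρ^2))*x))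
        - (ρ*(ρ^2-b^2)) * (ρ^2*(1-b^2)) * (1 - x^2) = ρ^3*(1-ρ^2)*(1-b^2)*(b-ρ*x)^2 := by ring
    have h9 : 0 ≤ ρ^3*(1-ρ^2)*(1-b^2)*(b-ρ*x)^2 :=
      mul_nonneg (mul_nonneg (mul_nonneg (pow_nonneg hρ0.le 3) h1ρ2) h1b2.le) (sq_nonneg (b-ρ*x))
    linarith [idk, h9]
  have main := mono_aux ρ (ρ*(ρ^2-b^2)) (ρ^2*(1-b^2)) (ρ*b*(1-ρ^2)) s hρ0 hA hB hC hACB hs0 hs1 hkey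
  -- positivity of E0
  have hE0 : 0 < (1-b^2)*Z - b*(1-ρ^2)*X := by
    nlinarith [mul_nonneg (mul_nonneg hb0 h1ρ2) (sub_nonneg.2 hZX.le),
      mul_pos hZpos (mul_pos (sub_pos.2 h2) (by nlinarith : (0:ℝ) < 1+ρ*b))]
  have hD0 : 0 < ρ^2*(1-b^2) - ρ*b*(1-ρ^2) * s := by
    have : ρ^2*(1-b^2) - ρ*b*(1-ρ^2) * s = ρ^2 * ((1-b^2)*Z - b*(1-ρ^2)*X) / Z := by
      rw [hs]; field_simp
    rw [this]; positivity
  have hrhs : (ρ*(ρ^2-b^2)) * s / (ρ^2*(1-b^2) - ρ*b*(1-ρ^2) * s)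
      = (ρ^2-b^2)*X / ((1-b^2)*Z - b*(1-ρ^2)*X) := by
    rw [hs]
    have hss : s * Z = ρ * X := by rw [hs]; field_simp
    rw [div_eq_div_iff hD0.ne' hE0.ne']
    linear_combination (ρ*(ρ^2-b^2)*(1-b^2)) * hss
  have hle : X / Y ≤ (ρ*(ρ^2-b^2)) * s / (ρ^2*(1-b^2) - ρ*b*(1-ρ^2) * s) := by
    rw [hrhs, div_le_div_iff₀ hYpos hE0]
    nlinarith [mul_le_mul_of_nonneg_left
      (by linarith : (1-b^2)*Z - b*(1-ρ^2)*X ≤ (ρ^2-b^2)*Y) hX0]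
  have hlt1 : (ρ*(ρ^2-b^2)) * s / (ρ^2*(1-b^2) - ρ*b*(1-ρ^2) * s) < 1 := by
    rw [div_lt_one hD0]
    nlinarith [mul_le_mul_of_nonneg_right hACB hs0]
  have goal1 : artanh (X / Y) ≤ ρ * artanh s :=
    le_trans (artanh_mono (by positivity) hle hlt1) main
  rw [norm_div]
  exact goal1

lemma no_pole (a b c d : ℂ) (hdet : a * d - b * c ≠ 0) (ρ : ℝ) (hρ0 : 0 < ρ)
    (hmap : ∀ z : ℂ, ‖z‖ < 1 → ‖(a * z + b) / (c * z + d)‖ < ρ)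
    (z : ℂ) (hz : ‖z‖ < 1) : c * z + d ≠ 0 := by
  intro h
  have hc : c ≠ 0 := by
    intro hc
    rw [hc, zero_mul, zero_add] at h
    exact hdet (by rw [h, hc]; ring)
  have hab : a * z + b ≠ 0 := by
    intro h2
    exact hdet (by linear_combination a * h - c * h2)
  have hr : 0 < ‖a * z + b‖ := norm_pos_iff.mpr hab
  set r := ‖a * z + b‖
  set K := ‖a‖ + ρ * ‖c‖ with hK
  have hK0 : 0 ≤ K := by positivity
  set ε := min ((1 - ‖z‖)/2) (r / (K + 1)) with hε
  have hε0 : 0 < ε := by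
    apply lt_min
    · linarith
    · positivity
  have hεz : ε ≤ (1 - ‖z‖)/2 := min_le_left _ _
  have hεr : ε ≤ r / (K + 1) := min_le_right _ _
  have hz' : ‖z + (ε:ℂ)‖ < 1 := by
    calc ‖z + (ε:ℂ)‖ ≤ ‖z‖ + ‖(ε:ℂ)‖ := norm_add_le _ _
      _ = ‖z‖ + ε := by rw [Complex.norm_real, Real.norm_of_nonneg hε0.le]
      _ < 1 := by linarith
  have hmain := hmap (z + ε) hz'
  have hden : c * (z + (ε:ℂ)) + d = c * ε := by rw [mul_add]; linear_combination h
  have hnum : a * (z + (ε:ℂ)) + b = (a * z + b) + a * ε := by ring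
  rw [hden, norm_div] at hmain
  have hdenn : ‖c * (ε:ℂ)‖ = ‖c‖ * ε := by
    rw [norm_mul, Complex.norm_real, Real.norm_of_nonneg hε0.le]
  rw [hdenn] at hmain
  have hdpos : 0 < ‖c‖ * ε := mul_pos (norm_pos_iff.mpr hc) hε0
  rw [div_lt_iff₀ hdpos] at hmain
  have hlow : r - ‖a‖ * ε ≤ ‖a * (z + (ε:ℂ)) + b‖ := by
    rw [hnum]
    have h2 : ‖a * (ε:ℂ)‖ = ‖a‖ * ε := by
      rw [norm_mul, Complex.norm_real, Real.norm_of_nonneg hε0.le]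
    have h3 := norm_sub_norm_le (a*z+b) (-(a*(ε:ℂ)))
    rw [sub_neg_eq_add, norm_neg, h2] at h3
    linarith
  have hεK : ε * (K + 1) ≤ r := by
    rw [div_eq_mul_inv] at hεr
    have := mul_le_mul_of_nonneg_right hεr (by positivity : (0:ℝ) ≤ K + 1)
    rwa [mul_assoc, inv_mul_cancel₀ (by positivity : (K:ℝ) + 1 ≠ 0), mul_one] at this
  rw [hK] at hεK
  nlinarith [hmain, hlow, hε0, hεK]

lemma norm_sq_eq_aux (w : ℂ) : ‖w‖^2 = Complex.normSq w := by
  rw [Complex.sq_norm]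

lemma P_bound (a b c d : ℂ) (hdet : a * d - b * c ≠ 0) (ρ : ℝ) (hρ0 : 0 < ρ)
    (hmap : ∀ z : ℂ, ‖z‖ < 1 → ‖(a * z + b) / (c * z + d)‖ < ρ) :
    ∀ z : ℂ, ‖z‖ < 1 →
      ρ * ‖a * d - b * c‖ * (1 - ‖z‖^2) ≤ ρ^2 * ‖c * z + d‖^2 - ‖a * z + b‖^2 := by
  set α := ρ^2 * Complex.normSq c - Complex.normSq a with hα
  set γ := ρ^2 * Complex.normSq d - Complex.normSq b with hγ
  set Bc := ((ρ^2 : ℝ) : ℂ) * (c * (starRingEnd ℂ) d) - a * (starRingEnd ℂ) b with hBc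
  set β := ‖Bc‖ with hβ
  set E := ρ * ‖a * d - b * c‖ with hE
  have hE0 : 0 < E := mul_pos hρ0 (norm_pos_iff.mpr hdet)
  have hβ0 : 0 ≤ β := norm_nonneg _
  have hform : ∀ z : ℂ, ρ^2 * Complex.normSq (c*z+d) - Complex.normSq (a*z+b)
      = α * Complex.normSq z + 2*(Bc*z).re + γ := by
    intro z
    simp only [hα, hγ, hBc, Complex.normSq_apply, Complex.mul_re, Complex.mul_im,
      Complex.add_re, Complex.add_im, Complex.sub_re, Complex.sub_im,
      Complex.conj_re, Complex.conj_im, Complex.ofReal_re, Complex.ofReal_im]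
    ring
  have hdet2 : α * γ - β^2 = -E^2 := by
    rw [hβ, hE, norm_sq_eq_aux, mul_pow, norm_sq_eq_aux]
    simp only [hα, hγ, hBc, Complex.normSq_apply, Complex.mul_re, Complex.mul_im,
      Complex.add_re, Complex.add_im, Complex.sub_re, Complex.sub_im,
      Complex.conj_re, Complex.conj_im, Complex.ofReal_re, Complex.ofReal_im]
    ring
  have hPpos : ∀ z : ℂ, ‖z‖ < 1 → 0 ≤ ρ^2 * Complex.normSq (c*z+d) - Complex.normSq (a*z+b) := by
    intro z hz
    have h1 := hmap z hz
    have h2 := no_pole a b c d hdet ρ hρ0 hmap z hz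
    rw [norm_div, div_lt_iff₀ (norm_pos_iff.mpr h2)] at h1
    have h3 : ‖a*z+b‖^2 ≤ ρ^2 * ‖c*z+d‖^2 := by nlinarith [norm_nonneg (a*z+b), norm_nonneg (c*z+d)]
    rw [norm_sq_eq_aux, norm_sq_eq_aux] at h3
    linarith
  have hq : ∀ t : ℝ, 0 ≤ t → t < 1 → 0 ≤ α*t^2 - 2*β*t + γ := by
    intro t ht0 ht1
    by_cases hB0 : Bc = 0
    · have h := hPpos (t:ℂ) (by rwa [Complex.norm_real, Real.norm_of_nonneg ht0])
      rw [hform] at h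
      have : β = 0 := by rw [hβ, hB0, norm_zero]
      rw [hB0] at h
      simp only [Complex.normSq_ofReal, zero_mul, Complex.zero_re] at h
      rw [this]
      nlinarith [h]
    · have hβpos : 0 < β := norm_pos_iff.mpr hB0
      set z : ℂ := -((t:ℂ) * (starRingEnd ℂ) Bc) / (β:ℂ) with hzdef
      have hznorm : ‖z‖ = t := by
        rw [hzdef, norm_div, norm_neg, norm_mul, RCLike.norm_conj, Complex.norm_real,
          Complex.norm_real, Real.norm_of_nonneg ht0, Real.norm_of_nonneg hβ0, ← hβ]
        field_simp
      have h := hPpos z (by rw [hznorm]; exact ht1)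
      rw [hform] at h
      have hre : (Bc * z).re = -(t*β) := by
        rw [hzdef]
        have : Bc * (-((t:ℂ) * (starRingEnd ℂ) Bc) / (β:ℂ))
            = -((t:ℂ) * ((Complex.normSq Bc : ℝ):ℂ)) / (β:ℂ) := by
          rw [← Complex.mul_conj]
          field_simp
        rw [this, ← norm_sq_eq_aux, ← hβ]
        have : -((t:ℂ) * (((β^2:ℝ)):ℂ)) / ((β:ℝ):ℂ) = (((-(t*β) : ℝ)):ℂ) := by
          rw [div_eq_iff (by exact_mod_cast hβpos.ne' : ((β:ℝ):ℂ) ≠ 0)]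
          push_cast
          ring
        rw [this, Complex.ofReal_re]
      have hz2 : Complex.normSq z = t^2 := by
        rw [← hznorm, ← norm_sq_eq_aux]
      rw [hre, hz2] at h
      nlinarith [h]
  have hq1 : 0 ≤ α + γ - 2*β := by
    have hten : Filter.Tendsto (fun t : ℝ => α*t^2 - 2*β*t + γ) (nhdsWithin 1 (Set.Iio 1))
        (nhds (α*1^2 - 2*β*1 + γ)) := by
      apply Filter.Tendsto.mono_left _ nhdsWithin_le_nhds
      exact (Continuous.tendsto (by continuity) 1)
    have hev : ∀ᶠ t in nhdsWithin (1:ℝ) (Set.Iio 1), 0 ≤ α*t^2 - 2*β*t + γ := by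
      filter_upwards [Ioo_mem_nhdsLT_of_mem (by norm_num : (1:ℝ) ∈ Set.Ioc 0 1)] with t ht
      exact hq t ht.1.le ht.2
    have := ge_of_tendsto hten hev
    nlinarith [this]
  have hα2 : 0 < α → α ≤ β := by
    intro hαpos
    by_contra hcon
    push_neg at hcon
    have h := hq (β/α) (by positivity) ((div_lt_one hαpos).mpr hcon)
    have heq : α*(β/α)^2 - 2*β*(β/α) + γ = (α*γ - β^2)/α := by
      field_simp
      ring
    rw [heq, hdet2] at h
    have : 0 < E^2/α := by positivity
    rw [neg_div] at h
    linarith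
  intro z hz
  have h := quad_aux α β γ E ‖z‖ hE0 hβ0 hdet2
    (by have := hq 0 le_rfl one_pos; nlinarith [this]) hq1 hα2 (norm_nonneg z) hz.le
  have hge : α*‖z‖^2 - 2*β*‖z‖ + γ ≤ ρ^2 * ‖c*z+d‖^2 - ‖a*z+b‖^2 := by
    have h5 : -(β * ‖z‖) ≤ (Bc*z).re := by
      have h9 := Complex.abs_re_le_norm (Bc*z)
      have h6 : ‖Bc*z‖ = β * ‖z‖ := by
        rw [norm_mul, hβ]
      rw [h6] at h9
      cases' abs_le.mp h9 with h7 h8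
      linarith
    rw [norm_sq_eq_aux (c*z+d), norm_sq_eq_aux (a*z+b), norm_sq_eq_aux z, hform z]
    linarith
  rw [hE] at *
  linarith

/-- A Möbius transformation `f` with `f(𝔻₁) ⊆ 𝔻_ρ`, `0 < ρ ≤ 1`,
contracts the hyperbolic distance on the unit disk by the factor `ρ`:
`d_hyp(f u, f v) ≤ ρ · d_hyp(u, v)` for all `u, v ∈ 𝔻₁`. -/
theorem mobius_small_image_hyperbolic_contraction
    (a b c d : ℂ) (hdet : a * d - b * c ≠ 0) (ρ : ℝ) (hρ0 : 0 < ρ) (hρ1 : ρ ≤ 1)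
    (hmap : ∀ z : ℂ, ‖z‖ < 1 → ‖(a * z + b) / (c * z + d)‖ < ρ) :
    ∀ u v : ℂ, ‖u‖ < 1 → ‖v‖ < 1 →
      dHyp ((a * u + b) / (c * u + d)) ((a * v + b) / (c * v + d)) ≤ ρ * dHyp u v := by
  intro u v hu hv
  set w1 := (a * u + b) / (c * u + d) with hw1def
  set w2 := (a * v + b) / (c * v + d) with hw2def
  have hw1 : ‖w1‖ < ρ := hmap u hu
  have hw2 : ‖w2‖ < ρ := hmap v hv
  set D := ‖a * d - b * c‖ with hD
  have hD0 : 0 < D := norm_pos_iff.mpr hdet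
  set β₁ := c * u + d with hβ₁
  set β₂ := c * v + d with hβ₂
  have hβ₁0 : β₁ ≠ 0 := no_pole a b c d hdet ρ hρ0 hmap u hu
  have hβ₂0 : β₂ ≠ 0 := no_pole a b c d hdet ρ hρ0 hmap v hv
  set R := ((ρ:ℂ))^2 * ((starRingEnd ℂ) β₂ * β₁) - (starRingEnd ℂ) (a*v+b) * (a*u+b) with hR
  -- I2 : normSq (1 - conj v * u) = (1 - nsq u)(1 - nsq v) + nsq (u - v)
  have cI2 : ((1:ℂ) - (starRingEnd ℂ) v * u) * (starRingEnd ℂ) ((1:ℂ) - (starRingEnd ℂ) v * u)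
      = (1 - u * (starRingEnd ℂ) u) * (1 - v * (starRingEnd ℂ) v)
        + (u - v) * (starRingEnd ℂ) (u - v) := by
    simp only [map_sub, map_mul, map_one, Complex.conj_conj]
    ring
  rw [Complex.mul_conj, Complex.mul_conj, Complex.mul_conj, Complex.mul_conj] at cI2
  have I2 : Complex.normSq (1 - (starRingEnd ℂ) v * u)
      = (1 - Complex.normSq u) * (1 - Complex.normSq v) + Complex.normSq (u - v) := by
    exact_mod_cast cI2
  have hnsqu : Complex.normSq u < 1 := by
    rw [← norm_sq_eq_aux]; nlinarith [norm_nonneg u]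
  have hnsqv : Complex.normSq v < 1 := by
    rw [← norm_sq_eq_aux]; nlinarith [norm_nonneg v]
  have h1uv : 0 < (1 - Complex.normSq u) * (1 - Complex.normSq v) :=
    mul_pos (by linarith) (by linarith)
  have hY'pos : 0 < ‖1 - (starRingEnd ℂ) v * u‖ := by
    rcases eq_or_ne (1 - (starRingEnd ℂ) v * u) 0 with h0 | h0
    · rw [h0] at I2
      simp only [Complex.normSq_zero] at I2
      nlinarith [Complex.normSq_nonneg (u - v)]
    · exact norm_pos_iff.mpr h0
  have hδuv1 : ‖u - v‖ / ‖1 - (starRingEnd ℂ) v * u‖ < 1 := by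
    rw [div_lt_one hY'pos]
    have h3 : ‖u - v‖^2 < ‖1 - (starRingEnd ℂ) v * u‖^2 := by
      rw [norm_sq_eq_aux, norm_sq_eq_aux, I2]
      linarith
    nlinarith [norm_nonneg (u - v), hY'pos]
  -- I1 : normSq R = Pu * Pv + ρ² D² normSq (u - v)
  have cI1 : R * (starRingEnd ℂ) R
      = (((ρ:ℂ))^2 * (β₁ * (starRingEnd ℂ) β₁) - (a*u+b) * (starRingEnd ℂ) (a*u+b))
        * (((ρ:ℂ))^2 * (β₂ * (starRingEnd ℂ) β₂) - (a*v+b) * (starRingEnd ℂ) (a*v+b))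
        + ((ρ:ℂ))^2 * ((a*d-b*c) * (starRingEnd ℂ) (a*d-b*c)) * ((u-v) * (starRingEnd ℂ) (u-v)) := by
    rw [hR, hβ₁, hβ₂]
    simp only [map_sub, map_mul, map_add, map_pow, map_one, Complex.conj_conj, Complex.conj_ofReal]
    ring
  rw [Complex.mul_conj, Complex.mul_conj, Complex.mul_conj, Complex.mul_conj,
    Complex.mul_conj, Complex.mul_conj, Complex.mul_conj] at cI1
  have I1 : Complex.normSq R
      = (ρ^2 * Complex.normSq β₁ - Complex.normSq (a*u+b))
        * (ρ^2 * Complex.normSq β₂ - Complex.normSq (a*v+b))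
        + ρ^2 * Complex.normSq (a*d-b*c) * Complex.normSq (u-v) := by
    exact_mod_cast cI1
  -- lower bounds for P, in normSq form
  have hPu := P_bound a b c d hdet ρ hρ0 hmap u hu
  have hPv := P_bound a b c d hdet ρ hρ0 hmap v hv
  rw [norm_sq_eq_aux, norm_sq_eq_aux, norm_sq_eq_aux] at hPu hPv
  set E := ρ * D with hEdef
  have hE0 : 0 < E := mul_pos hρ0 hD0
  have hE2 : E^2 = ρ^2 * Complex.normSq (a*d-b*c) := by
    rw [hEdef, mul_pow, hD, norm_sq_eq_aux]
  have hLu0 : 0 ≤ E * (1 - Complex.normSq u) := by nlinarith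
  have hLv0 : 0 ≤ E * (1 - Complex.normSq v) := by nlinarith
  have hRge : E * ‖1 - (starRingEnd ℂ) v * u‖ ≤ ‖R‖ := by
    have e3 : (E * (1 - Complex.normSq u)) * (E * (1 - Complex.normSq v))
        ≤ (ρ^2 * Complex.normSq β₁ - Complex.normSq (a*u+b))
          * (ρ^2 * Complex.normSq β₂ - Complex.normSq (a*v+b)) :=
      mul_le_mul hPu hPv hLv0 (le_trans hLu0 hPu)
    have hsq : (E * ‖1 - (starRingEnd ℂ) v * u‖)^2 ≤ ‖R‖^2 := by
      rw [norm_sq_eq_aux R, I1, mul_pow, norm_sq_eq_aux (1 - (starRingEnd ℂ) v * u), I2, ← hE2]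
      nlinarith [e3]
    have hs := Real.sqrt_le_sqrt hsq
    rwa [Real.sqrt_sq (by positivity), Real.sqrt_sq (norm_nonneg R)] at hs
  -- norm factorizations
  have hid1 : (w1 - w2) * (β₁ * β₂) = (a*d - b*c) * (u - v) := by
    rw [hw1def, hw2def]
    field_simp
    ring
  have hnorm1 : ‖w1 - w2‖ * (‖β₁‖ * ‖β₂‖) = D * ‖u - v‖ := by
    rw [← norm_mul, ← norm_mul, hid1, norm_mul]
  have hconjβ₂ : (starRingEnd ℂ) β₂ ≠ 0 := by
    simpa using hβ₂0
  have hid2 : (((ρ:ℂ))^2 - (starRingEnd ℂ) w2 * w1) * ((starRingEnd ℂ) β₂ * β₁) = R := by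
    rw [hw1def, hw2def, hR, map_div₀]
    field_simp
  have hnorm2 : ‖((ρ:ℂ))^2 - (starRingEnd ℂ) w2 * w1‖ * (‖β₂‖ * ‖β₁‖) = ‖R‖ := by
    have hcb : ‖β₂‖ = ‖(starRingEnd ℂ) β₂‖ := (RCLike.norm_conj _).symm
    rw [hcb, ← norm_mul, ← norm_mul, hid2]
  have hZpos : 0 < ‖((ρ:ℂ))^2 - (starRingEnd ℂ) w2 * w1‖ := by
    have h6 := norm_sub_norm_le (((ρ:ℂ))^2) ((starRingEnd ℂ) w2 * w1)
    have h7 : ‖(((ρ:ℂ))^2 : ℂ)‖ = ρ^2 := by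
      rw [show (((ρ:ℂ))^2 : ℂ) = (((ρ^2:ℝ)):ℂ) by push_cast; ring, Complex.norm_real,
        Real.norm_of_nonneg (by positivity)]
    have h8 : ‖(starRingEnd ℂ) w2 * w1‖ < ρ^2 := by
      rw [norm_mul, RCLike.norm_conj]
      nlinarith [norm_nonneg w1, norm_nonneg w2]
    linarith [h6]
  -- s ≤ δuv
  have hsle : ρ * ‖w1 - w2‖ / ‖((ρ:ℂ))^2 - (starRingEnd ℂ) w2 * w1‖
      ≤ ‖u - v‖ / ‖1 - (starRingEnd ℂ) v * u‖ := by
    rw [div_le_div_iff₀ hZpos hY'pos]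
    have hp : 0 < ‖β₁‖ * ‖β₂‖ :=
      mul_pos (norm_pos_iff.mpr hβ₁0) (norm_pos_iff.mpr hβ₂0)
    rw [← mul_le_mul_iff_of_pos_right hp]
    have lhs_eq : ρ * ‖w1 - w2‖ * ‖1 - (starRingEnd ℂ) v * u‖ * (‖β₁‖ * ‖β₂‖)
        = ρ * (D * ‖u - v‖) * ‖1 - (starRingEnd ℂ) v * u‖ := by
      rw [← hnorm1]; ring
    have rhs_eq : ‖u - v‖ * ‖((ρ:ℂ))^2 - (starRingEnd ℂ) w2 * w1‖ * (‖β₁‖ * ‖β₂‖)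
        = ‖u - v‖ * ‖R‖ := by
      rw [← hnorm2]; ring
    rw [lhs_eq, rhs_eq]
    have h9 := mul_le_mul_of_nonneg_left hRge (norm_nonneg (u - v))
    rw [hEdef] at h9
    nlinarith [h9]
  -- final chain
  have hstep1 := two_point ρ hρ0 hρ1 w1 w2 hw1 hw2
  have hs0 : 0 ≤ ρ * ‖w1 - w2‖ / ‖((ρ:ℂ))^2 - (starRingEnd ℂ) w2 * w1‖ := by positivity
  have hstep2 := artanh_mono hs0 hsle hδuv1
  rw [norm_div] at hstep1
  have hstep3 := mul_le_mul_of_nonneg_left hstep2 hρ0.le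
  rw [dHyp, dHyp, norm_div, norm_div]
  linarith
end

section
/- Let g(z) = (az+b)/(cz+d) be a Möbius transformation mapping the closed unit disk into the open unit disk. Define its transpose g^⊤(z) = (az+c)/(bz+d). Then g^⊤ also maps the closed unit disk into the open unit disk. -/
/-- If the Möbius transformation `g(z) = (az+b)/(cz+d)` maps the closed unit
disk into the open unit disk (in particular its pole lies outside the closed unit disk),
then its transpose `g^⊤(z) = (az+c)/(bz+d)` also maps the closed unit disk into the open
unit disk (and its pole lies outside the closed unit disk). -/
theorem mobius_transpose_maps_disk
    (a b c d : ℂ) (hdet : a * d - b * c ≠ 0)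
    (hpole : ∀ z : ℂ, ‖z‖ ≤ 1 → c * z + d ≠ 0)
    (hmap : ∀ z : ℂ, ‖z‖ ≤ 1 → ‖(a * z + b) / (c * z + d)‖ < 1) :
    ∀ z : ℂ, ‖z‖ ≤ 1 → b * z + d ≠ 0 ∧ ‖(a * z + c) / (b * z + d)‖ < 1 := by
  intro z hz
  have hd : d ≠ 0 := by simpa using hpole 0 (by norm_num)
  rcases eq_or_ne z 0 with rfl | hz0
  · refine ⟨by simpa using hd, ?_⟩
    have hcd : ‖c‖ < ‖d‖ := by
      by_contra h
      push_neg at h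
      have hc : c ≠ 0 := by
        intro h0
        rw [h0, norm_zero] at h
        exact hd (norm_le_zero_iff.mp h)
      refine hpole (-d / c) ?_ ?_
      · rw [norm_div, norm_neg, div_le_one (norm_pos_iff.mpr hc)]
        exact h
      · field_simp; ring
    simpa [norm_div] using (div_lt_one (lt_of_le_of_lt (norm_nonneg c) hcd)).mpr hcd
  · by_cases hac : a * z + c = 0
    · have hbd : b * z + d ≠ 0 := by
        intro h0
        apply hdet
        have hc : c = -(a * z) := by linear_combination hac
        have hdd : d = -(b * z) := by linear_combination h0
        rw [hc, hdd]; ring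
      exact ⟨hbd, by simp [hac, lt_of_le_of_lt (norm_nonneg z) (lt_of_le_of_lt hz one_lt_two)]⟩
    · set ζ : ℂ := -(b * z + d) / (a * z + c) with hζ
      have hζ1 : 1 < ‖ζ‖ := by
        by_contra h
        push_neg at h
        have hden := hpole ζ h
        have key : (a * ζ + b) / (c * ζ + d) = -1 / z := by
          have h1 : a * ζ + b = -(a * d - b * c) / (a * z + c) := by
            rw [hζ]; field_simp; ring
          have h2 : c * ζ + d = (a * d - b * c) * z / (a * z + c) := by
            rw [hζ, mul_div_assoc', div_add' _ _ _ hac]; congr 1; ring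
          rw [h1, h2]
          field_simp
        have := hmap ζ h
        rw [key] at this
        rw [norm_div, norm_neg, norm_one, div_lt_one (norm_pos_iff.mpr hz0)] at this
        linarith
      have hζ0 : ζ ≠ 0 := by
        intro h0
        rw [h0, norm_zero] at hζ1
        linarith
      have hbd : b * z + d ≠ 0 := by
        intro h0
        apply hζ0
        rw [hζ, h0]; simp
      refine ⟨hbd, ?_⟩
      have key2 : (a * z + c) / (b * z + d) = -1 / ζ := by
        rw [hζ, div_div_eq_mul_div, neg_one_mul, neg_div, div_neg, neg_neg]
      rw [key2, norm_div, norm_neg, norm_one, div_lt_one (lt_trans one_pos hζ1)]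
      exact hζ1
end

section
/- Let Q be an irreducible row-stochastic matrix on a finite set C. Fix r* ∈ C and let M be the matrix obtained from I − Q by replacing its r*-th column with the all-ones column vector. Then M is invertible. -/
open Matrix Finset

private lemma pow_nonneg_entries {C : Type*} [Fintype C] [DecidableEq C]
    (Q : Matrix C C ℝ) (hQnn : ∀ r r', 0 ≤ Q r r') :
    ∀ n r r', 0 ≤ (Q ^ n) r r' := by
  intro n
  induction n with
  | zero => intro r r'; simp [Matrix.one_apply]; positivity
  | succ n ih =>
    intro r r'
    rw [pow_succ, Matrix.mul_apply]
    exact Finset.sum_nonneg fun c _ => mul_nonneg (ih r c) (hQnn c r')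

private lemma pow_row_sum {C : Type*} [Fintype C] [DecidableEq C]
    (Q : Matrix C C ℝ) (hQrow : ∀ r, ∑ r', Q r r' = 1) :
    ∀ n r, ∑ r', (Q ^ n) r r' = 1 := by
  intro n
  induction n with
  | zero => intro r; simp [Matrix.one_apply]
  | succ n ih =>
    intro r
    simp only [pow_succ, Matrix.mul_apply]
    rw [Finset.sum_comm]
    calc ∑ c, ∑ r', (Q ^ n) r c * Q c r'
        = ∑ c, (Q ^ n) r c * ∑ r', Q c r' := by
          simp [Finset.mul_sum]
      _ = 1 := by simp [hQrow, ih r]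

/-- Let `Q` be an irreducible row-stochastic matrix on a finite set `C`,
fix `r* ∈ C`, and let `M` be obtained from `I − Q` by replacing its `r*`-th column with
the all-ones vector. Then `M` is invertible. -/
theorem replaced_column_matrix_invertible
    {C : Type*} [Fintype C] [DecidableEq C] [Nonempty C]
    (Q : Matrix C C ℝ)
    (hQnn : ∀ r r', 0 ≤ Q r r') (hQrow : ∀ r, ∑ r', Q r r' = 1)
    (hQirr : ∀ r r', ∃ n, 0 < n ∧ 0 < (Q ^ n) r r')
    (rstar : C) :
    IsUnit (Matrix.updateCol ((1 : Matrix C C ℝ) - Q) rstar (fun _ => 1)) := by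
  set M := Matrix.updateCol ((1 : Matrix C C ℝ) - Q) rstar (fun _ => 1) with hM
  rw [Matrix.isUnit_iff_isUnit_det, isUnit_iff_ne_zero]
  intro hdet
  obtain ⟨v, hv0, hv⟩ := (Matrix.exists_mulVec_eq_zero_iff).mpr hdet
  -- Decompose: y agrees with v off rstar, y rstar = 0
  set y : C → ℝ := Function.update v rstar 0 with hy
  have hyrstar : y rstar = 0 := by simp [hy]
  have hyv : ∀ r, r ≠ rstar → y r = v r := by
    intro r hr; simp [hy, Function.update_of_ne hr]
  -- key equation: ∀ r, y r = (Q *ᵥ y) r - v rstar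
  have key : ∀ r, y r = (Q.mulVec y) r - v rstar := by
    intro r
    have h0 : M.mulVec v r = 0 := by rw [hv]; rfl
    rw [Matrix.mulVec] at h0
    have : (M r) ⬝ᵥ v = ∑ c, (if c = rstar then 1 else ((1 : Matrix C C ℝ) - Q) r c) * v c := by
      simp [dotProduct, hM, Matrix.updateCol_apply]
    rw [this] at h0
    have hsplit : ∑ c, (if c = rstar then 1 else ((1 : Matrix C C ℝ) - Q) r c) * v c
        = v rstar + ∑ c, ((1 : Matrix C C ℝ) - Q) r c * y c := by
      rw [← Finset.sum_erase_add _ _ (Finset.mem_univ rstar),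
          ← Finset.sum_erase_add _ _ (Finset.mem_univ rstar)]
      simp only [eq_self_iff_true, if_true, one_mul, hyrstar, mul_zero, add_zero]
      rw [add_comm]
      congr 1
      apply Finset.sum_congr rfl
      intro c hc
      have hc' : c ≠ rstar := Finset.ne_of_mem_erase hc
      rw [if_neg hc', hyv c hc']
    rw [hsplit] at h0
    have hsub : ∑ c, ((1 : Matrix C C ℝ) - Q) r c * y c = y r - (Q.mulVec y) r := by
      simp only [Matrix.sub_apply, sub_mul, Finset.sum_sub_distrib, Matrix.mulVec,
        dotProduct]
      congr 1
      simp [Matrix.one_apply, ite_mul]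
    rw [hsub] at h0
    linarith
  -- Q *ᵥ y is bounded by max/min of y
  obtain ⟨rmax, hrmax⟩ := Finite.exists_max y
  obtain ⟨rmin, hrmin⟩ := Finite.exists_min y
  have hQy_le : ∀ r, (Q.mulVec y) r ≤ y rmax := by
    intro r
    calc (Q.mulVec y) r = ∑ c, Q r c * y c := rfl
      _ ≤ ∑ c, Q r c * y rmax :=
          Finset.sum_le_sum fun c _ => mul_le_mul_of_nonneg_left (hrmax c) (hQnn r c)
      _ = y rmax := by rw [← Finset.sum_mul, hQrow r, one_mul]
  have hQy_ge : ∀ r, y rmin ≤ (Q.mulVec y) r := by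
    intro r
    calc y rmin = ∑ c, Q r c * y rmin := by rw [← Finset.sum_mul, hQrow r, one_mul]
      _ ≤ ∑ c, Q r c * y c :=
          Finset.sum_le_sum fun c _ => mul_le_mul_of_nonneg_left (hrmin c) (hQnn r c)
      _ = (Q.mulVec y) r := rfl
  -- v rstar = 0
  have hc0 : v rstar = 0 := by
    have h1 := key rmax
    have h2 := key rmin
    have := hQy_le rmax
    have := hQy_ge rmin
    linarith
  -- y = Q *ᵥ y, hence y = Q^n *ᵥ y
  have hfix : Q.mulVec y = y := by
    funext r
    have := key r
    rw [hc0] at this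
    linarith [this]
  have hfixn : ∀ n, (Q ^ n).mulVec y = y := by
    intro n
    induction n with
    | zero => simp
    | succ n ih => rw [pow_succ, ← Matrix.mulVec_mulVec, hfix, ih]
  -- y is constant = y rmax
  have hconst : ∀ r, y r = y rmax := by
    intro r
    obtain ⟨n, hn, hpos⟩ := hQirr rmax r
    have heq : ∑ c, (Q ^ n) rmax c * (y rmax - y c) = 0 := by
      have h1 : ∑ c, (Q ^ n) rmax c * y c = y rmax := by
        have := congrFun (hfixn n) rmax
        simpa [Matrix.mulVec, dotProduct] using this
      have h2 : ∑ c, (Q ^ n) rmax c * y rmax = y rmax := by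
        rw [← Finset.sum_mul, pow_row_sum Q hQrow n rmax, one_mul]
      simp only [mul_sub, Finset.sum_sub_distrib, h1, h2, sub_self]
    have hallz := (Finset.sum_eq_zero_iff_of_nonneg
      (fun c _ => mul_nonneg (pow_nonneg_entries Q hQnn n rmax c)
        (sub_nonneg.mpr (hrmax c)))).mp heq r (Finset.mem_univ r)
    have := mul_eq_zero.mp hallz
    rcases this with h | h
    · exact absurd h (ne_of_gt hpos)
    · linarith [sub_eq_zero.mp h]
  -- conclude y = 0, hence v = 0, contradiction
  have hymax0 : y rmax = 0 := by rw [← hconst rstar, hyrstar]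
  apply hv0
  funext r
  by_cases hr : r = rstar
  · rw [hr]; exact hc0
  · rw [← hyv r hr, hconst r, hymax0]; rfl
end
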